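/- In the active sensing setup with B = (S·A_tx) ⊙ A_rx and N_s = rank(S): if krank(B) = min(N_s·N_rx, N_Σ), then rank((S ⊗ I_{N_rx})·Υ) = min(N_s·N_rx, N_Σ), and equivalently the dimension of the intersection of the null space of the linear map x ↦ (S ⊗ I_{N_rx})·x on ℂ^{N_tx·N_rx} with the column space of Υ equals max(N_Σ − N_s·N_rx, 0). -/

import Mathlib

open scoped Kronecker

/-- The Kruskal rank of a complex matrix `M`: the largest integer `r` such that
every set of `r` columns of `M` is linearly independent. -/
noncomputable def krank {m n : Type*} [Fintype m] [Fintype n] (M : Matrix m n ℂ) : ℕ :=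
  sSup {r : ℕ | r ≤ Fintype.card n ∧
    ∀ s : Finset n, s.card = r → LinearIndependent ℂ (fun j : s => M.transpose (j : n))}

/-- The Khatri-Rao (columnwise Kronecker) product. -/
def khatriRao {p q V : Type*} (A : Matrix p V ℂ) (B : Matrix q V ℂ) :
    Matrix (p × q) V ℂ :=
  Matrix.of fun nm i => A nm.1 i * B nm.2 i

open Module
lemma rank_kron_one_le {T Ntx Nrx : ℕ} (S : Matrix (Fin T) (Fin Ntx) ℂ) :
    (S ⊗ₖ (1 : Matrix (Fin Nrx) (Fin Nrx) ℂ)).rank ≤ S.rank * Nrx := by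
  classical
  set W := LinearMap.range S.mulVecLin with hW
  let φ : (Fin Nrx → W) →ₗ[ℂ] ((Fin T × Fin Nrx) → ℂ) :=
    { toFun := fun v p => (v p.2 : Fin T → ℂ) p.1
      map_add' := by intros; ext p; simp
      map_smul' := by intros; ext p; simp }
  have hle : LinearMap.range (S ⊗ₖ (1 : Matrix (Fin Nrx) (Fin Nrx) ℂ)).mulVecLin
      ≤ LinearMap.range φ := by
    rintro y ⟨x, rfl⟩
    refine ⟨fun b => ⟨S.mulVec (fun n => x (n, b)), ⟨_, rfl⟩⟩, ?_⟩
    ext ⟨t, b⟩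
    simp only [φ, LinearMap.coe_mk, AddHom.coe_mk, Matrix.mulVecLin_apply,
      Matrix.mulVec, dotProduct, Matrix.kroneckerMap_apply, Matrix.one_apply,
      Fintype.sum_prod_type, mul_ite, mul_one, mul_zero, ite_mul, zero_mul]
    rw [Finset.sum_comm]
    simp
  have h1 : (S ⊗ₖ (1 : Matrix (Fin Nrx) (Fin Nrx) ℂ)).rank ≤ finrank ℂ (LinearMap.range φ) :=
    Submodule.finrank_mono hle
  refine h1.trans ((LinearMap.finrank_range_le φ).trans ?_)
  rw [Module.finrank_pi_fintype]
  simp [Matrix.rank, mul_comm]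
  exact le_rfl


/-- if the sensing matrix `B = (S·A_tx) ⊙ A_rx` achieves the maximal
Kruskal rank `min (N_s·N_rx) N_Σ` (with `N_s = rank S`), then
`rank ((S ⊗ I) Υ) = min (N_s·N_rx) N_Σ`, and equivalently
`dim (ker (S ⊗ I) ⊓ range Υ) = max (N_Σ − N_s·N_rx) 0`. -/
theorem stmt_3 (Ntx Nrx T V Nsum : ℕ)
    (hNtx : 0 < Ntx) (hNrx : 0 < Nrx) (hT : 0 < T) (hV : 0 < V)
    (dtx : Fin Ntx → ℤ) (drx : Fin Nrx → ℤ)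
    (hdtx0 : dtx ⟨0, hNtx⟩ = 0) (hdtxMono : StrictMono dtx)
    (hdrx0 : drx ⟨0, hNrx⟩ = 0) (hdrxMono : StrictMono drx)
    (θ : Fin V → ℝ) (hθinj : Function.Injective θ)
    (hθrange : ∀ i, θ i ∈ Set.Ico (-(Real.pi / 2)) (Real.pi / 2))
    (Atx : Matrix (Fin Ntx) (Fin V) ℂ)
    (hAtx : ∀ n i, Atx n i =
      Complex.exp (Complex.I * Real.pi * (dtx n : ℂ) * (Real.sin (θ i) : ℂ)))
    (Arx : Matrix (Fin Nrx) (Fin V) ℂ)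
    (hArx : ∀ m i, Arx m i =
      Complex.exp (Complex.I * Real.pi * (drx m : ℂ) * (Real.sin (θ i) : ℂ)))
    (dSig : Fin Nsum → ℤ) (hdSigMono : StrictMono dSig)
    (hdSigrange : ∀ z : ℤ, (∃ ℓ, dSig ℓ = z) ↔ ∃ n m, dtx n + drx m = z)
    (Υ : Matrix (Fin Ntx × Fin Nrx) (Fin Nsum) ℂ)
    (hΥ : ∀ n m ℓ, Υ (n, m) ℓ = if dtx n + drx m = dSig ℓ then 1 else 0)
    (S : Matrix (Fin T) (Fin Ntx) ℂ)
    (hB : krank (khatriRao (S * Atx) Arx) = min (S.rank * Nrx) Nsum) :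
    ((S ⊗ₖ (1 : Matrix (Fin Nrx) (Fin Nrx) ℂ)) * Υ).rank = min (S.rank * Nrx) Nsum ∧
      Module.finrank ℂ
        ↥(LinearMap.ker (Matrix.mulVecLin (S ⊗ₖ (1 : Matrix (Fin Nrx) (Fin Nrx) ℂ))) ⊓
            LinearMap.range Υ.mulVecLin) = max (Nsum - S.rank * Nrx) 0 := by
  classical
  set K : Matrix (Fin T × Fin Nrx) (Fin Ntx × Fin Nrx) ℂ :=
    S ⊗ₖ (1 : Matrix (Fin Nrx) (Fin Nrx) ℂ) with hK
  set r : ℕ := min (S.rank * Nrx) Nsum with hr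
  set B : Matrix (Fin T × Fin Nrx) (Fin V) ℂ := khatriRao (S * Atx) Arx with hBdef
  set ASum : Matrix (Fin Nsum) (Fin V) ℂ :=
    Matrix.of fun ℓ i =>
      Complex.exp (Complex.I * Real.pi * (dSig ℓ : ℂ) * (Real.sin (θ i) : ℂ)) with hASum
  -- factorization: Υ * ASum = khatriRao Atx Arx
  have hfact1 : Υ * ASum = khatriRao Atx Arx := by
    ext ⟨n, m⟩ i
    obtain ⟨ℓ₀, hℓ₀⟩ := (hdSigrange (dtx n + drx m)).mpr ⟨n, m, rfl⟩
    have huniq : ∀ ℓ : Fin Nsum, (dtx n + drx m = dSig ℓ) ↔ ℓ = ℓ₀ := by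
      intro ℓ
      constructor
      · intro h; exact hdSigMono.injective (by rw [hℓ₀, ← h])
      · rintro rfl; exact hℓ₀.symm
    simp only [Matrix.mul_apply, hΥ, huniq, ite_mul, one_mul, zero_mul,
      Finset.sum_ite_eq', Finset.mem_univ, if_true]
    simp only [khatriRao, Matrix.of_apply, hAtx, hArx, hASum, hℓ₀, ← Complex.exp_add]
    congr 1
    push_cast
    ring
  -- factorization: K * khatriRao Atx Arx = B
  have hfact2 : K * khatriRao Atx Arx = B := by
    ext ⟨t, b⟩ i
    simp only [hK, hBdef, Matrix.mul_apply, khatriRao, Matrix.of_apply,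
      Matrix.kroneckerMap_apply, Matrix.one_apply, Fintype.sum_prod_type,
      mul_ite, mul_one, mul_zero, ite_mul, zero_mul]
    rw [Finset.sum_comm]
    simp [Finset.sum_mul, mul_assoc]
  have hfact : K * Υ * ASum = B := by rw [Matrix.mul_assoc, hfact1, hfact2]
  -- membership of r in the krank set
  have hmem : r ∈ {r : ℕ | r ≤ Fintype.card (Fin V) ∧
      ∀ s : Finset (Fin V), s.card = r →
        LinearIndependent ℂ (fun j : s => B.transpose (j : Fin V))} := by
    rw [← hB]
    apply Nat.sSup_mem
    · refine ⟨0, Nat.zero_le _, ?_⟩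
      intro s hs
      rw [Finset.card_eq_zero] at hs
      subst hs
      exact linearIndependent_empty_type
    · exact ⟨Fintype.card (Fin V), fun x hx => hx.1⟩
  obtain ⟨hrV, hrli⟩ := hmem
  -- lower bound: r ≤ rank B
  have hrankB : r ≤ B.rank := by
    obtain ⟨s, -, hs⟩ := Finset.exists_subset_card_eq
      (show r ≤ (Finset.univ : Finset (Fin V)).card by simpa using hrV)
    have li := hrli s hs
    have h1 : finrank ℂ (Submodule.span ℂ (Set.range (fun j : s => B.transpose (j : Fin V))))
        = r := by rw [finrank_span_eq_card li, Fintype.card_coe, hs]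
    rw [Matrix.rank_eq_finrank_span_cols, ← h1]
    apply Submodule.finrank_mono
    apply Submodule.span_mono
    rintro _ ⟨j, rfl⟩
    exact ⟨j, rfl⟩
  -- rank of the product
  have hrankKΥ : (K * Υ).rank = r := by
    apply le_antisymm
    · exact le_min ((Matrix.rank_mul_le_left K Υ).trans (rank_kron_one_le S))
        ((Matrix.rank_mul_le_right K Υ).trans (by simpa using Υ.rank_le_card_width))
    · calc r ≤ B.rank := hrankB
        _ = (K * Υ * ASum).rank := by rw [hfact]
        _ ≤ (K * Υ).rank := Matrix.rank_mul_le_left _ _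
  refine ⟨hrankKΥ, ?_⟩
  -- rank Υ = Nsum
  have hli : LinearIndependent ℂ Υ.transpose := by
    refine Fintype.linearIndependent_iff.mpr ?_
    intro g hg ℓ
    obtain ⟨n, m, hnm⟩ := (hdSigrange (dSig ℓ)).mp ⟨ℓ, rfl⟩
    have huniq : ∀ ℓ' : Fin Nsum, (dtx n + drx m = dSig ℓ') ↔ ℓ' = ℓ := by
      intro ℓ'
      constructor
      · intro h; exact hdSigMono.injective (h.symm.trans hnm)
      · rintro rfl; exact hnm
    have := congrFun hg (n, m)
    simpa [Finset.sum_apply, Matrix.transpose_apply, hΥ, huniq, mul_ite,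
      Finset.sum_ite_eq', Finset.mem_univ] using this
  have hrankΥ : Υ.rank = Nsum := by
    rw [Matrix.rank_eq_finrank_span_cols]
    exact (finrank_span_eq_card hli).trans (Fintype.card_fin _)
  -- rank-nullity on the restriction of K to the range of Υ
  set f := K.mulVecLin with hf
  set W := LinearMap.range Υ.mulVecLin with hWdef
  have hrn := LinearMap.finrank_range_add_finrank_ker (f.domRestrict W)
  have hrange : LinearMap.range (f.domRestrict W) = W.map f := LinearMap.range_domRestrict W f
  have hker : finrank ℂ (LinearMap.ker (f.domRestrict W)) = finrank ℂ ↥(LinearMap.ker f ⊓ W) := by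
    have h1 : LinearMap.ker (f.domRestrict W) = Submodule.comap W.subtype (LinearMap.ker f ⊓ W) := by
      rw [LinearMap.ker_domRestrict, Submodule.comap_inf, Submodule.comap_subtype_self, inf_top_eq]
    rw [h1]
    exact LinearEquiv.finrank_eq (Submodule.comapSubtypeEquivOfLe inf_le_right)
  have hmapf : finrank ℂ (W.map f) = r := by
    rw [← hrankKΥ]
    unfold f W
    rw [Matrix.rank, Matrix.mulVecLin_mul, LinearMap.range_comp]
  have hWrank : finrank ℂ W = Nsum := hrankΥ
  rw [hrange, hker, hmapf, hWrank] at hrn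
  have : finrank ℂ ↥(LinearMap.ker f ⊓ W) = Nsum - r := by omega
  rw [this]
  unfold r
  omega
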